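/- Let ρ0 and ρ1 be n×n complex density matrices with a priori probabilities η0, η1 > 0, η0 + η1 = 1, let F = Tr(√(√ρ0 · ρ1 · √ρ0)) > 0, and let P0 be the orthogonal projection onto the range of ρ0 with Tr(P0 ρ1) > 0. If √η0 · F ≤ √η1 · Tr(P0 ρ1) (third regime), then for any USD POVM (E0, E1, E?) the failure probability Q = η0·Tr(E? ρ0) + η1·Tr(E? ρ1) satisfies Q ≥ η0·F²/Tr(P0 ρ1) + η1·Tr(P0 ρ1). -/

import Mathlib

open Matrix
open scoped ComplexOrder

set_option maxHeartbeats 1000000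

/-- The positive semidefinite square root of a matrix (zero if the matrix is not
positive semidefinite). -/
noncomputable def msqrt {n : ℕ} (A : Matrix (Fin n) (Fin n) ℂ) : Matrix (Fin n) (Fin n) ℂ :=
  open scoped Classical in
  if h : A.PosSemidef then
    (h.1.eigenvectorUnitary : Matrix (Fin n) (Fin n) ℂ) *
      diagonal (((↑) : ℝ → ℂ) ∘ Real.sqrt ∘ h.1.eigenvalues) *
      (star h.1.eigenvectorUnitary : Matrix (Fin n) (Fin n) ℂ)
  else 0

/-- `P` is the orthogonal projection onto the range (support) of `A`. -/
def IsRangeProj {n : ℕ} (A P : Matrix (Fin n) (Fin n) ℂ) : Prop :=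
  P.IsHermitian ∧ P * P = P ∧
    LinearMap.range P.mulVecLin = LinearMap.range A.mulVecLin

section Aux

variable {n : ℕ}

noncomputable def Matrix.PosSemidef.sqrt {A : Matrix (Fin n) (Fin n) ℂ} (h : A.PosSemidef) :
    Matrix (Fin n) (Fin n) ℂ :=
  (h.1.eigenvectorUnitary : Matrix (Fin n) (Fin n) ℂ) *
    diagonal (((↑) : ℝ → ℂ) ∘ Real.sqrt ∘ h.1.eigenvalues) *
    (star h.1.eigenvectorUnitary : Matrix (Fin n) (Fin n) ℂ)

lemma aux_udu {U S D E : Matrix (Fin n) (Fin n) ℂ} (hU : S * U = 1) :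
    U * D * S * (U * E * S) = U * (D * E) * S := by
  rw [show U * D * S * (U * E * S) = U * D * (S * U) * E * S by noncomm_ring, hU]; noncomm_ring

lemma Matrix.PosSemidef.sqrt_mul_self {A : Matrix (Fin n) (Fin n) ℂ} (h : A.PosSemidef) :
    h.sqrt * h.sqrt = A := by
  rw [Matrix.PosSemidef.sqrt, aux_udu (Unitary.coe_star_mul_self _), diagonal_mul_diagonal]
  conv_rhs => rw [h.1.spectral_theorem, Unitary.conjStarAlgAut_apply]
  congr 2
  congr 1
  funext i
  simp only [Function.comp]
  rw [← Complex.ofReal_mul, Real.mul_self_sqrt (h.eigenvalues_nonneg i)]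
  rfl

lemma Matrix.PosSemidef.posSemidef_sqrt {A : Matrix (Fin n) (Fin n) ℂ} (h : A.PosSemidef) :
    h.sqrt.PosSemidef := by
  have hD : (diagonal (((↑) : ℝ → ℂ) ∘ Real.sqrt ∘ h.1.eigenvalues)).PosSemidef := by
    rw [posSemidef_diagonal_iff]; intro i; simp only [Function.comp]
    exact_mod_cast Real.sqrt_nonneg _
  have := hD.mul_mul_conjTranspose_same (h.1.eigenvectorUnitary : Matrix (Fin n) (Fin n) ℂ)
  rw [← star_eq_conjTranspose] at this
  exact this


lemma conjTranspose_mul_self_trace_zero (D : Matrix (Fin n) (Fin n) ℂ)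
    (h : (Dᴴ * D).trace = 0) : D = 0 := by
  have h1 : (Dᴴ * D).trace = ((∑ j, ∑ i, Complex.normSq (D i j) : ℝ) : ℂ) := by
    simp only [Matrix.trace, Matrix.diag, Matrix.mul_apply, Matrix.conjTranspose_apply]
    push_cast
    refine Finset.sum_congr rfl fun j _ => Finset.sum_congr rfl fun i _ => ?_
    rw [Complex.normSq_eq_conj_mul_self]; rfl
  rw [h1] at h
  have h2 : (∑ j, ∑ i, Complex.normSq (D i j) : ℝ) = 0 := by exact_mod_cast h
  ext i j
  have h3 := (Finset.sum_eq_zero_iff_of_nonneg (fun j _ =>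
    Finset.sum_nonneg (fun i _ => Complex.normSq_nonneg (D i j)))).mp h2 j (Finset.mem_univ j)
  have h4 := (Finset.sum_eq_zero_iff_of_nonneg (fun i _ =>
    Complex.normSq_nonneg (D i j))).mp h3 i (Finset.mem_univ i)
  simpa using Complex.normSq_eq_zero.mp h4

lemma sqrt_mul_sqrt_eq_zero {X Y : Matrix (Fin n) (Fin n) ℂ}
    (hX : X.PosSemidef) (hY : Y.PosSemidef) (h : (X * Y).trace = 0) :
    hX.sqrt * hY.sqrt = 0 := by
  apply conjTranspose_mul_self_trace_zero
  have hS : hX.sqrt.IsHermitian := hX.posSemidef_sqrt.1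
  have hT : hY.sqrt.IsHermitian := hY.posSemidef_sqrt.1
  have : (hX.sqrt * hY.sqrt)ᴴ * (hX.sqrt * hY.sqrt) = hY.sqrt * (X * hY.sqrt) := by
    rw [conjTranspose_mul, hS.eq, hT.eq]
    rw [show hY.sqrt * hX.sqrt * (hX.sqrt * hY.sqrt)
        = hY.sqrt * ((hX.sqrt * hX.sqrt) * hY.sqrt) by noncomm_ring, hX.sqrt_mul_self]
  rw [this, Matrix.trace_mul_comm, Matrix.mul_assoc, hY.sqrt_mul_self, Matrix.trace_mul_comm, Matrix.trace_mul_comm]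
  exact h

lemma mul_sqrt_eq_zero {X Y : Matrix (Fin n) (Fin n) ℂ}
    (hX : X.PosSemidef) (hY : Y.PosSemidef) (h : (X * Y).trace = 0) :
    X * hY.sqrt = 0 := by
  have h0 := sqrt_mul_sqrt_eq_zero hX hY h
  calc X * hY.sqrt = hX.sqrt * (hX.sqrt * hY.sqrt) := by
        rw [← Matrix.mul_assoc, hX.sqrt_mul_self]
    _ = 0 := by rw [h0, Matrix.mul_zero]

lemma mul_eq_zero_of_trace_zero {X Y : Matrix (Fin n) (Fin n) ℂ}
    (hX : X.PosSemidef) (hY : Y.PosSemidef) (h : (X * Y).trace = 0) :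
    X * Y = 0 := by
  have h0 := mul_sqrt_eq_zero hX hY h
  calc X * Y = (X * hY.sqrt) * hY.sqrt := by rw [Matrix.mul_assoc, hY.sqrt_mul_self]
    _ = 0 := by rw [h0, Matrix.zero_mul]

lemma PosSemidef.trace_re_nonneg {Z : Matrix (Fin n) (Fin n) ℂ} (hZ : Z.PosSemidef) :
    0 ≤ Z.trace.re := by
  have h : ∀ j, 0 ≤ (Z j j).re := by
    intro j
    simpa using (Complex.le_def.mp (hZ.diag_nonneg (i := j))).1
  rw [Matrix.trace]
  simp only [Complex.re_sum]
  exact Finset.sum_nonneg fun j _ => h j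

lemma trace_mul_re_nonneg {X Y : Matrix (Fin n) (Fin n) ℂ}
    (hX : X.PosSemidef) (hY : Y.PosSemidef) : 0 ≤ (X * Y).trace.re := by
  have h1 : (X * Y).trace = (hY.sqrt * X * hY.sqrt).trace := by
    conv_lhs => rw [← hY.sqrt_mul_self, ← Matrix.mul_assoc, Matrix.trace_mul_comm,
      ← Matrix.mul_assoc]
  rw [h1]
  have : (hY.sqrt * X * hY.sqrt).PosSemidef := by
    have := hX.mul_mul_conjTranspose_same hY.sqrt
    rwa [hY.posSemidef_sqrt.1.eq] at this
  exact PosSemidef.trace_re_nonneg this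

lemma trace_mul_le_trace {X Y : Matrix (Fin n) (Fin n) ℂ}
    (hX : X.PosSemidef) (hY : Y.PosSemidef) (h1X : (1 - X).PosSemidef) :
    (X * Y).trace.re ≤ Y.trace.re := by
  have h := trace_mul_re_nonneg h1X hY
  have : ((1 - X) * Y).trace = Y.trace - (X * Y).trace := by
    rw [Matrix.sub_mul, Matrix.trace_sub, Matrix.one_mul]
  rw [this] at h
  simp only [Complex.sub_re] at h
  linarith


lemma euclid_norm_sq (x : EuclideanSpace ℂ (Fin n)) : ‖x‖ ^ 2 = ∑ r, ‖x r‖ ^ 2 := by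
  rw [EuclideanSpace.norm_eq, Real.sq_sqrt]
  exact Finset.sum_nonneg fun r _ => sq_nonneg _

lemma frob_eq (B : Matrix (Fin n) (Fin n) ℂ) :
    (B * Bᴴ).trace.re = ∑ r, ∑ c, ‖B r c‖ ^ 2 := by
  simp only [Matrix.trace, Matrix.diag, Matrix.mul_apply, Matrix.conjTranspose_apply]
  rw [Complex.re_sum]
  refine Finset.sum_congr rfl fun r _ => ?_
  rw [Complex.re_sum]
  refine Finset.sum_congr rfl fun c _ => ?_
  rw [show star (B r c) = (starRingEnd ℂ) (B r c) from rfl, Complex.mul_conj, Complex.ofReal_re]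
  rw [Complex.normSq_eq_norm_sq]

lemma key_cs (A B : Matrix (Fin n) (Fin n) ℂ) :
    ((msqrt ((A * B) * (A * B)ᴴ)).trace.re) ^ 2 ≤ (A * Aᴴ).trace.re * (B * Bᴴ).trace.re := by
  classical
  set C := A * B with hC
  have hM : (C * Cᴴ).PosSemidef := Matrix.posSemidef_self_mul_conjTranspose C
  have hmsqrt : msqrt (C * Cᴴ) = hM.sqrt := dif_pos hM
  rw [hmsqrt]
  set N := hM.sqrt with hNdef
  have hN : N.PosSemidef := hM.posSemidef_sqrt
  have hH : N.IsHermitian := hN.1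
  set σ : Fin n → ℝ := hH.eigenvalues with hσ
  have hσ0 : ∀ j, 0 ≤ σ j := hN.eigenvalues_nonneg
  set V : Fin n → EuclideanSpace ℂ (Fin n) := fun j => hH.eigenvectorBasis j with hV
  -- trace of N is the sum of eigenvalues
  have htr : N.trace.re = ∑ j, σ j := by
    have h1 : N.trace = ∑ j, (σ j : ℂ) := by
      conv_lhs => rw [hH.spectral_theorem, Unitary.conjStarAlgAut_apply]
      rw [Matrix.trace_mul_cycle,
        Matrix.mem_unitaryGroup_iff'.mp (Matrix.IsHermitian.eigenvectorUnitary hH).2,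
        Matrix.one_mul, Matrix.trace_diagonal]
      rfl
    rw [h1, Complex.re_sum]
    simp
  -- action of C * Cᴴ on eigenvectors
  have hvec : ∀ j, N *ᵥ ⇑(V j) = (σ j : ℂ) • ⇑(V j) := by
    intro j
    rw [hV]
    rw [hH.mulVec_eigenvectorBasis j]
    rw [RCLike.real_smul_eq_coe_smul (K := ℂ)]
    rfl
  have hMvec : ∀ j, (C * Cᴴ) *ᵥ ⇑(V j) = ((σ j : ℂ) ^ 2) • ⇑(V j) := by
    intro j
    rw [← hM.sqrt_mul_self, ← hNdef, ← Matrix.mulVec_mulVec, hvec, Matrix.mulVec_smul, hvec,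
      smul_smul, sq]
  -- the vectors w j = Cᴴ v j
  set w : Fin n → (Fin n → ℂ) := fun j => Cᴴ *ᵥ ⇑(V j) with hw
  have hVdot : ∀ j k, star ⇑(V j) ⬝ᵥ ⇑(V k) = if j = k then 1 else 0 := by
    intro j k
    have := orthonormal_iff_ite.mp (hH.eigenvectorBasis.orthonormal) j k
    rw [EuclideanSpace.inner_eq_star_dotProduct, dotProduct_comm] at this
    exact this
  have hwdot : ∀ j k, star (w j) ⬝ᵥ w k = ((σ k : ℂ) ^ 2) * (if j = k then 1 else 0) := by
    intro j k
    rw [hw]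
    simp only
    rw [Matrix.star_mulVec, Matrix.conjTranspose_conjTranspose, ← Matrix.dotProduct_mulVec,
      Matrix.mulVec_mulVec, hMvec k, dotProduct_smul, hVdot j k, smul_eq_mul]
  -- the index set of nonzero eigenvalues
  set S : Finset (Fin n) := Finset.univ.filter (fun j => σ j ≠ 0) with hS
  set toE : (Fin n → ℂ) → EuclideanSpace ℂ (Fin n) := fun x => (WithLp.equiv 2 (Fin n → ℂ)).symm x with htoE
  have htoE_apply : ∀ (x : Fin n → ℂ), ⇑(toE x) = x := fun _ => rfl
  have hinner : ∀ (x y : EuclideanSpace ℂ (Fin n)),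
      (inner ℂ x y : ℂ) = star ⇑x ⬝ᵥ ⇑y := fun x y => by
        rw [EuclideanSpace.inner_eq_star_dotProduct, dotProduct_comm]
  -- the orthonormal family u
  set u : S → EuclideanSpace ℂ (Fin n) := fun i => toE (((σ i.1 : ℂ))⁻¹ • w i.1) with hu
  have huf : ∀ i : S, (WithLp.equiv 2 (Fin n → ℂ)) (u i) = ((σ i.1 : ℂ))⁻¹ • w i.1 :=
    fun i => rfl
  have huf' : ∀ i : S, (u i).ofLp = ((σ i.1 : ℂ))⁻¹ • w i.1 :=
    fun i => rfl
  have hσS : ∀ i : S, (σ i.1 : ℂ) ≠ 0 := by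
    intro i
    have h2 := Finset.mem_filter.mp i.2
    exact_mod_cast h2.2
  have hu_ortho : Orthonormal ℂ u := by
    rw [orthonormal_iff_ite]
    intro i j
    rw [hinner, huf', huf', star_smul, smul_dotProduct, dotProduct_smul, hwdot i.1 j.1,
      star_inv₀]
    rw [show star ((σ i.1 : ℝ) : ℂ) = ((σ i.1 : ℝ) : ℂ) from Complex.conj_ofReal _]
    rcases eq_or_ne i j with rfl | hij
    · rw [if_pos rfl, if_pos rfl]
      rw [smul_eq_mul, smul_eq_mul, mul_one]
      field_simp
      exact div_self (hσS i)
    · have hij' : i.1 ≠ j.1 := fun h => hij (Subtype.ext h)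
      rw [if_neg hij', if_neg hij]
      rw [smul_eq_mul, smul_eq_mul, mul_zero, mul_zero, mul_zero]
  -- per-index inequality
  have hkey : ∀ i : S, σ i.1 ≤
      ‖toE (Aᴴ *ᵥ (WithLp.equiv 2 (Fin n → ℂ)) (V i.1))‖ *
        ‖toE (B *ᵥ (WithLp.equiv 2 (Fin n → ℂ)) (u i))‖ := by
    intro i
    have hweq : Cᴴ *ᵥ (WithLp.equiv 2 (Fin n → ℂ)) (V i.1) = w i.1 := rfl
    have hinner_eq : (inner ℂ (toE (B *ᵥ (WithLp.equiv 2 (Fin n → ℂ)) (u i)))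
        (toE (Aᴴ *ᵥ (WithLp.equiv 2 (Fin n → ℂ)) (V i.1))) : ℂ) = ((σ i.1 : ℝ) : ℂ) := by
      rw [hinner]
      simp only [htoE_apply]
      rw [Matrix.star_mulVec, ← Matrix.dotProduct_mulVec, Matrix.mulVec_mulVec,
        ← Matrix.conjTranspose_mul, ← hC, hweq, huf, star_smul,
        smul_dotProduct, hwdot i.1 i.1, if_pos rfl, star_inv₀]
      rw [show star ((σ i.1 : ℝ) : ℂ) = ((σ i.1 : ℝ) : ℂ) from Complex.conj_ofReal _]
      rw [smul_eq_mul, mul_one, sq]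
      rw [← mul_assoc, inv_mul_cancel₀ (hσS i), one_mul]
    have h1 : σ i.1 = (inner ℂ (toE (B *ᵥ (WithLp.equiv 2 (Fin n → ℂ)) (u i)))
        (toE (Aᴴ *ᵥ (WithLp.equiv 2 (Fin n → ℂ)) (V i.1))) : ℂ).re := by
      rw [hinner_eq, Complex.ofReal_re]
    rw [h1, mul_comm]
    exact re_inner_le_norm (𝕜 := ℂ) _ _
  -- Bessel bound for B
  have hBessel_B : ∑ i : S, ‖toE (B *ᵥ (WithLp.equiv 2 (Fin n → ℂ)) (u i))‖ ^ 2 ≤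
      (B * Bᴴ).trace.re := by
    rw [frob_eq]
    have h1 : ∀ i : S, ‖toE (B *ᵥ (WithLp.equiv 2 (Fin n → ℂ)) (u i))‖ ^ 2 =
        ∑ r, ‖(B *ᵥ (WithLp.equiv 2 (Fin n → ℂ)) (u i)) r‖ ^ 2 := by
      intro i; exact euclid_norm_sq _
    rw [Finset.sum_congr rfl (fun i _ => h1 i), Finset.sum_comm]
    refine Finset.sum_le_sum fun r _ => ?_
    have hx : ∀ (y : EuclideanSpace ℂ (Fin n)), (B *ᵥ (WithLp.equiv 2 (Fin n → ℂ)) y) r =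
        (inner ℂ (toE (fun c => star (B r c))) y : ℂ) := by
      intro y
      rw [hinner, htoE_apply]
      simp [Matrix.mulVec, dotProduct]
    have hb := hu_ortho.sum_inner_products_le (toE (fun c => star (B r c)))
      (s := Finset.univ)
    calc ∑ i : S, ‖(B *ᵥ (WithLp.equiv 2 (Fin n → ℂ)) (u i)) r‖ ^ 2
        = ∑ i : S, ‖(inner ℂ (u i) (toE (fun c => star (B r c))) : ℂ)‖ ^ 2 := by
          refine Finset.sum_congr rfl fun i _ => ?_
          rw [hx (u i), norm_inner_symm]
      _ ≤ ‖toE (fun c => star (B r c))‖ ^ 2 := hb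
      _ = ∑ c, ‖B r c‖ ^ 2 := by
          rw [euclid_norm_sq]
          refine Finset.sum_congr rfl fun c _ => ?_
          rw [show toE (fun c => star (B r c)) c = star (B r c) from rfl, norm_star]
  -- Bessel bound for A
  have hVS_ortho : Orthonormal ℂ (fun i : S => V i.1) :=
    hH.eigenvectorBasis.orthonormal.comp _ Subtype.val_injective
  have hBessel_A : ∑ i : S, ‖toE (Aᴴ *ᵥ (WithLp.equiv 2 (Fin n → ℂ)) (V i.1))‖ ^ 2 ≤
      (A * Aᴴ).trace.re := by
    rw [frob_eq]
    have h1 : ∀ i : S, ‖toE (Aᴴ *ᵥ (WithLp.equiv 2 (Fin n → ℂ)) (V i.1))‖ ^ 2 =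
        ∑ r, ‖(Aᴴ *ᵥ (WithLp.equiv 2 (Fin n → ℂ)) (V i.1)) r‖ ^ 2 := by
      intro i; exact euclid_norm_sq _
    rw [Finset.sum_congr rfl (fun i _ => h1 i), Finset.sum_comm]
    have hswap : ∑ r, ∑ c, ‖A r c‖ ^ 2 = ∑ r, ∑ c, ‖A c r‖ ^ 2 := Finset.sum_comm
    rw [hswap]
    refine Finset.sum_le_sum fun r _ => ?_
    have hx : ∀ (y : EuclideanSpace ℂ (Fin n)), (Aᴴ *ᵥ (WithLp.equiv 2 (Fin n → ℂ)) y) r =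
        (inner ℂ (toE (fun c => A c r)) y : ℂ) := by
      intro y
      rw [hinner, htoE_apply]
      simp [Matrix.mulVec, dotProduct, Matrix.conjTranspose_apply]
    have hb := hVS_ortho.sum_inner_products_le (toE (fun c => A c r)) (s := Finset.univ)
    calc ∑ i : S, ‖(Aᴴ *ᵥ (WithLp.equiv 2 (Fin n → ℂ)) (V i.1)) r‖ ^ 2
        = ∑ i : S, ‖(inner ℂ (V i.1) (toE (fun c => A c r)) : ℂ)‖ ^ 2 := by
          refine Finset.sum_congr rfl fun i _ => ?_
          rw [hx (V i.1), norm_inner_symm]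
      _ ≤ ‖toE (fun c => A c r)‖ ^ 2 := hb
      _ = ∑ c, ‖A c r‖ ^ 2 := by
          rw [euclid_norm_sq]
          exact Finset.sum_congr rfl fun c _ => rfl
  -- assemble
  have hfilter : ∑ j, σ j = ∑ i : S, σ i.1 := by
    rw [← Finset.sum_filter_ne_zero Finset.univ (f := σ), ← hS, ← Finset.sum_coe_sort S σ]
  rw [htr, hfilter]
  have hσsum_nonneg : 0 ≤ ∑ i : S, σ i.1 := Finset.sum_nonneg fun i _ => hσ0 i.1
  have hcs : (∑ i : S, σ i.1) ^ 2 ≤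
      (∑ i : S, ‖toE (Aᴴ *ᵥ (WithLp.equiv 2 (Fin n → ℂ)) (V i.1))‖ ^ 2) *
        (∑ i : S, ‖toE (B *ᵥ (WithLp.equiv 2 (Fin n → ℂ)) (u i))‖ ^ 2) := by
    calc (∑ i : S, σ i.1) ^ 2
        ≤ (∑ i : S, ‖toE (Aᴴ *ᵥ (WithLp.equiv 2 (Fin n → ℂ)) (V i.1))‖ *
            ‖toE (B *ᵥ (WithLp.equiv 2 (Fin n → ℂ)) (u i))‖) ^ 2 := by
          apply pow_le_pow_left₀ hσsum_nonneg
          exact Finset.sum_le_sum fun i _ => hkey i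
      _ ≤ _ := Finset.sum_mul_sq_le_sq_mul_sq _ _ _
  refine hcs.trans (mul_le_mul hBessel_A hBessel_B ?_ ?_)
  · exact Finset.sum_nonneg fun i _ => sq_nonneg _
  · rw [frob_eq]
    exact Finset.sum_nonneg fun r _ => Finset.sum_nonneg fun c _ => sq_nonneg _

lemma mul_rangeProj_eq_zero {ρ P E : Matrix (Fin n) (Fin n) ℂ} (hρ : ρ.PosSemidef)
    (hP : IsRangeProj ρ P) (hE : E * hρ.sqrt = 0) : E * P = 0 := by
  have hEv : ∀ y, (E * P) *ᵥ y = 0 := by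
    intro y
    have hmem : P *ᵥ y ∈ LinearMap.range ρ.mulVecLin := by
      rw [← hP.2.2]
      exact ⟨y, rfl⟩
    obtain ⟨z, hz⟩ := hmem
    rw [Matrix.mulVecLin_apply] at hz
    rw [← Matrix.mulVec_mulVec, ← hz, ← hρ.sqrt_mul_self, ← Matrix.mulVec_mulVec,
      Matrix.mulVec_mulVec, hE, Matrix.zero_mulVec]
  ext i j
  have h := congrFun (hEv (Pi.single j 1)) i
  rw [Matrix.mulVec_single] at h
  simpa using h


end Aux

/-- **Theorem 3, third regime.** If `√η0 · F ≤ √η1 · Tr(P0 ρ1)`, then any USD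
POVM has failure probability `Q ≥ η0·F²/Tr(P0 ρ1) + η1·Tr(P0 ρ1)`. -/
theorem failure_bound_third_regime {n : ℕ}
    (ρ0 ρ1 E0 E1 Eq P0 : Matrix (Fin n) (Fin n) ℂ)
    (hρ0 : ρ0.PosSemidef) (hρ0tr : ρ0.trace = 1)
    (hρ1 : ρ1.PosSemidef) (hρ1tr : ρ1.trace = 1)
    (η0 η1 : ℝ) (hη0 : 0 < η0) (hη1 : 0 < η1) (hη : η0 + η1 = 1)
    (hP0 : IsRangeProj ρ0 P0)
    (hF : 0 < (msqrt (msqrt ρ0 * ρ1 * msqrt ρ0)).trace.re)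
    (hT0 : 0 < (P0 * ρ1).trace.re)
    (hregime : Real.sqrt η0 * (msqrt (msqrt ρ0 * ρ1 * msqrt ρ0)).trace.re ≤
      Real.sqrt η1 * (P0 * ρ1).trace.re)
    (hE0 : E0.PosSemidef) (hE1 : E1.PosSemidef) (hEq : Eq.PosSemidef)
    (hsum : E0 + E1 + Eq = 1)
    (husd0 : (E0 * ρ1).trace = 0) (husd1 : (E1 * ρ0).trace = 0) :
    η0 * ((msqrt (msqrt ρ0 * ρ1 * msqrt ρ0)).trace.re) ^ 2 / (P0 * ρ1).trace.re +
        η1 * (P0 * ρ1).trace.re ≤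
      η0 * (Eq * ρ0).trace.re + η1 * (Eq * ρ1).trace.re := by
  have hmsρ0 : msqrt ρ0 = hρ0.sqrt := dif_pos hρ0
  rw [hmsρ0] at hF hregime ⊢
  set S0 := hρ0.sqrt with hS0def
  set S1 := hρ1.sqrt with hS1def
  set SEq := hEq.sqrt with hSEqdef
  have hS0H : S0.IsHermitian := hρ0.posSemidef_sqrt.1
  have hS1H : S1.IsHermitian := hρ1.posSemidef_sqrt.1
  have hSEqH : SEq.IsHermitian := hEq.posSemidef_sqrt.1
  set F := (msqrt (S0 * ρ1 * S0)).trace.re with hFdef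
  set T := (P0 * ρ1).trace.re with hTdef
  set q0 := (Eq * ρ0).trace.re with hq0def
  set q1 := (Eq * ρ1).trace.re with hq1def
  -- step 1 : E1 kills the support of ρ0
  have hE1S0 : E1 * S0 = 0 := mul_sqrt_eq_zero hE1 hρ0 husd1
  have hE1P0 : E1 * P0 = 0 := mul_rangeProj_eq_zero hρ0 hP0 hE1S0
  have hP0E1 : P0 * E1 = 0 := by
    have h := congrArg Matrix.conjTranspose hE1P0
    rwa [Matrix.conjTranspose_mul, hP0.1.eq, hE1.1.eq, Matrix.conjTranspose_zero] at h
  have h1 : (1 - P0) * E1 = E1 := by rw [Matrix.sub_mul, Matrix.one_mul, hP0E1, sub_zero]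
  have h2 : E1 * (1 - P0) = E1 := by rw [Matrix.mul_sub, Matrix.mul_one, hE1P0, sub_zero]
  -- step 2 : Tr(E1 ρ1) ≤ 1 - T
  set Y := (1 - P0) * ρ1 * (1 - P0) with hYdef
  have hY : Y.PosSemidef := by
    have h := hρ1.mul_mul_conjTranspose_same (1 - P0)
    have hherm : (1 - P0)ᴴ = 1 - P0 := by
      rw [Matrix.conjTranspose_sub, Matrix.conjTranspose_one, hP0.1.eq]
    rwa [hherm] at h
  have htrE1Y : (E1 * Y).trace = (E1 * ρ1).trace := by
    have e1 : E1 * Y = E1 * (ρ1 * (1 - P0)) := by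
      rw [hYdef, show E1 * ((1 - P0) * ρ1 * (1 - P0)) =
        (E1 * (1 - P0)) * (ρ1 * (1 - P0)) by noncomm_ring, h2]
    rw [e1, show E1 * (ρ1 * (1 - P0)) = E1 * ρ1 * (1 - P0) by noncomm_ring,
      Matrix.trace_mul_comm, show (1 - P0) * (E1 * ρ1) = ((1 - P0) * E1) * ρ1 by noncomm_ring,
      h1]
  have hE1le : (1 - E1).PosSemidef := by
    have : (1 : Matrix (Fin n) (Fin n) ℂ) - E1 = E0 + Eq := by rw [← hsum]; noncomm_ring
    rw [this]
    exact hE0.add hEq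
  have hYtrace : Y.trace = ρ1.trace - (P0 * ρ1).trace := by
    have hPP : (1 - P0) * (1 - P0) = 1 - P0 := by
      rw [Matrix.sub_mul, Matrix.mul_sub, Matrix.mul_sub, Matrix.one_mul, Matrix.mul_one,
        hP0.2.1]
      noncomm_ring
    rw [hYdef, Matrix.trace_mul_cycle, hPP, Matrix.sub_mul, Matrix.one_mul,
      Matrix.trace_sub]
  have hE1ρ1 : (E1 * ρ1).trace.re ≤ 1 - T := by
    have hb := trace_mul_le_trace hE1 hY hE1le
    rw [htrE1Y] at hb
    have : Y.trace.re = 1 - T := by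
      rw [hYtrace, Complex.sub_re, hρ1tr]
      simp [hTdef]
    linarith
  -- step 3 : q1 ≥ T
  have hEqdef : Eq = 1 - E0 - E1 := by rw [← hsum]; noncomm_ring
  have hq1T : T ≤ q1 := by
    have : (Eq * ρ1).trace = ρ1.trace - (E0 * ρ1).trace - (E1 * ρ1).trace := by
      rw [hEqdef, Matrix.sub_mul, Matrix.sub_mul, Matrix.one_mul, Matrix.trace_sub,
        Matrix.trace_sub]
    have hre : q1 = 1 - (E0 * ρ1).trace.re - (E1 * ρ1).trace.re := by
      rw [hq1def, this, Complex.sub_re, Complex.sub_re, hρ1tr]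
      simp
    rw [hre, husd0]
    simp only [Complex.zero_re, sub_zero]
    linarith
  -- step 4 : q0 ≥ 0
  have hq0nn : 0 ≤ q0 := trace_mul_re_nonneg hEq hρ0
  -- step 5 : F^2 ≤ q0 * q1
  have hE0S1 : E0 * S1 = 0 := mul_sqrt_eq_zero hE0 hρ1 husd0
  have hS0E1 : S0 * E1 = 0 := by
    have h := congrArg Matrix.conjTranspose hE1S0
    rwa [Matrix.conjTranspose_mul, hS0H.eq, hE1.1.eq, Matrix.conjTranspose_zero] at h
  set A := S0 * SEq with hAdef
  set B := SEq * S1 with hBdef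
  have hABC : A * B = S0 * S1 := by
    have e1 : A * B = S0 * Eq * S1 := by
      rw [hAdef, hBdef, show S0 * SEq * (SEq * S1) = S0 * (SEq * SEq) * S1 by noncomm_ring,
        hEq.sqrt_mul_self]
    rw [e1, hEqdef]
    rw [show S0 * (1 - E0 - E1) * S1 = S0 * S1 - S0 * (E0 * S1) - S0 * E1 * S1 by noncomm_ring,
      hE0S1, hS0E1, Matrix.mul_zero, Matrix.zero_mul, sub_zero, sub_zero]
  have hMeq : S0 * ρ1 * S0 = (A * B) * (A * B)ᴴ := by
    rw [hABC, Matrix.conjTranspose_mul, hS0H.eq, hS1H.eq,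
      show S0 * S1 * (S1 * S0) = S0 * (S1 * S1) * S0 by noncomm_ring, hρ1.sqrt_mul_self]
  have hF2 : F ^ 2 ≤ q0 * q1 := by
    have hk := key_cs A B
    rw [← hMeq] at hk
    have hAA : (A * Aᴴ).trace = (Eq * ρ0).trace := by
      rw [hAdef, Matrix.conjTranspose_mul, hS0H.eq, hSEqH.eq,
        show S0 * SEq * (SEq * S0) = S0 * (SEq * SEq) * S0 by noncomm_ring,
        hEq.sqrt_mul_self, Matrix.trace_mul_cycle, hρ0.sqrt_mul_self,
        Matrix.trace_mul_comm]
    have hBB : (B * Bᴴ).trace = (Eq * ρ1).trace := by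
      rw [hBdef, Matrix.conjTranspose_mul, hS1H.eq, hSEqH.eq,
        show SEq * S1 * (S1 * SEq) = SEq * (S1 * S1) * SEq by noncomm_ring,
        hρ1.sqrt_mul_self, Matrix.trace_mul_cycle, hEq.sqrt_mul_self,
        Matrix.trace_mul_comm, Matrix.trace_mul_comm]
    rw [hAA, hBB] at hk
    exact hk
  -- step 6 : the regime inequality squared
  have hreg2 : η0 * F ^ 2 ≤ η1 * T ^ 2 := by
    have h1' : (Real.sqrt η0 * F) ^ 2 ≤ (Real.sqrt η1 * T) ^ 2 := by
      exact pow_le_pow_left₀ (by positivity) hregime 2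
    rwa [mul_pow, mul_pow, Real.sq_sqrt hη0.le, Real.sq_sqrt hη1.le] at h1'
  -- final arithmetic
  have hq1pos : 0 < q1 := lt_of_lt_of_le hT0 hq1T
  have hdiv : η0 * F ^ 2 / T ≤ η0 * q0 + η1 * q1 - η1 * T := by
    rw [div_le_iff₀ hT0]
    nlinarith [mul_nonneg (sub_nonneg.2 hq1T) (sub_nonneg.2 (hreg2.trans
        (by nlinarith [mul_nonneg (mul_nonneg hη1.le hT0.le) (sub_nonneg.2 hq1T)] : η1 * T ^ 2 ≤ η1 * T * q1))),
      mul_nonneg (mul_nonneg hη0.le hT0.le) (sub_nonneg.2 hF2), hq1pos, hF2,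
      mul_pos hη0 (mul_pos hF hF)]
  linarith
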